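/- Let A ∈ Z^{m×n} be a bimodular matrix of rank m with differing columns. If a ∈ Z^m lies in the convex hull of the columns of A together with their negatives and the zero vector, then the matrix obtained by appending the column a to A is still bimodular. -/

import Mathlib

/-- `A` has differing columns: no column is zero and no two columns are equal
or negatives of each other. -/
def DiffCols {m n : ℕ} (A : Matrix (Fin m) (Fin n) ℤ) : Prop :=
  (∀ j, (fun i => A i j) ≠ 0) ∧
  ∀ j j' : Fin n, j ≠ j' →
    (fun i => A i j) ≠ (fun i => A i j') ∧ (fun i => A i j) ≠ (fun i => -A i j')

/-- `A` is `Δ`-modular: every `m × m` minor has absolute value at most `Δ`. -/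
def DMod {m n : ℕ} (A : Matrix (Fin m) (Fin n) ℤ) (Δ : ℤ) : Prop :=
  ∀ g : Fin m → Fin n, |(A.submatrix id g).det| ≤ Δ

theorem stmt1 {m n : ℕ} (A : Matrix (Fin m) (Fin n) ℤ)
    (hrank : A.rank = m) (hmod : DMod A 2) (hdiff : DiffCols A)
    (a : Fin m → ℤ)
    (ha : (fun i => (a i : ℝ)) ∈ convexHull ℝ
      (({0} : Set (Fin m → ℝ)) ∪ {x | ∃ j, x = fun i => (A i j : ℝ)} ∪
        {x | ∃ j, x = fun i => -(A i j : ℝ)})) :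
    DMod (Matrix.of fun i (j : Fin (n+1)) => (Fin.cons (a i) (A i) : Fin (n+1) → ℤ) j) 2 := by
  classical
  intro g
  have conslem : ∀ (i : Fin m) (x : Fin (n+1)) (h : x ≠ 0),
      (Fin.cons (a i) (A i) : Fin (n+1) → ℤ) x = A i (x.pred h) := by
    intro i x h
    induction x using Fin.cases with
    | zero => exact absurd rfl h
    | succ j => simp
  set M := ((Matrix.of fun i (j : Fin (n+1)) =>
      (Fin.cons (a i) (A i) : Fin (n+1) → ℤ) j).submatrix id g) with hMdef
  by_cases h0 : ∀ l, g l ≠ 0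
  · -- no occurrence of the new column: a minor of A
    have hEq : M = A.submatrix id (fun l => (g l).pred (h0 l)) := by
      ext i l
      simp only [hMdef, Matrix.submatrix_apply, Matrix.of_apply, id]
      exact conslem i (g l) (h0 l)
    rw [hEq]; exact hmod _
  · push_neg at h0
    obtain ⟨k, hk⟩ := h0
    by_cases h1 : ∀ l, g l = 0 → l = k
    · -- exactly one occurrence of the new column
      -- integer base matrix (column k will be overwritten)
      set Bi : Matrix (Fin m) (Fin m) ℤ :=
        fun i l => if h : g l = 0 then 0 else A i ((g l).pred h) with hBi
      set B : Matrix (Fin m) (Fin m) ℝ := Bi.map (Int.cast) with hB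
      set f : (Fin m → ℝ) →ₗ[ℝ] ℝ :=
        { toFun := fun x => (B.updateCol k x).det
          map_add' := fun x y => Matrix.det_updateCol_add B k x y
          map_smul' := fun c x => Matrix.det_updateCol_smul B k c x } with hf
      -- key : for an integer vector v, f (cast v) is the cast of an integer det
      have key : ∀ v : Fin m → ℤ,
          f (fun i => (v i : ℝ)) = (((Bi.updateCol k v).det : ℤ) : ℝ) := by
        intro v
        have : B.updateCol k (fun i => (v i : ℝ)) =
            (Bi.updateCol k v).map (Int.cast) := by
          ext i l
          by_cases hl : l = k <;>
            simp [Matrix.updateCol_apply, hl, hB, Matrix.map_apply]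
        simp only [hf, LinearMap.coe_mk, AddHom.coe_mk, this]
        have h2 := RingHom.map_det (Int.castRingHom ℝ) (Bi.updateCol k v)
        rw [RingHom.mapMatrix_apply] at h2
        exact h2.symm
      -- minors of A : for any j, updating column k of Bi with column j of A
      have minor : ∀ j : Fin n, |(Bi.updateCol k (fun i => A i j)).det| ≤ 2 := by
        intro j
        have hEq : Bi.updateCol k (fun i => A i j) =
            A.submatrix id (fun l => if h : g l = 0 then j else (g l).pred h) := by
          ext i l
          by_cases hl : l = k
          · subst hl
            simp [Matrix.updateCol_apply, hk]
          · have hgl : g l ≠ 0 := fun h => hl (h1 l h)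
            rw [Matrix.updateCol_ne hl]
            simp [Matrix.updateCol_apply, hl, hBi, hgl]
        rw [hEq]; exact hmod _
      -- the generating set lies in the sublevel set
      have hsub : (({0} : Set (Fin m → ℝ)) ∪ {x | ∃ j, x = fun i => (A i j : ℝ)} ∪
          {x | ∃ j, x = fun i => -(A i j : ℝ)}) ⊆ f ⁻¹' Set.Icc (-2 : ℝ) 2 := by
        rintro x (hx | hx)
        · rcases hx with hx | hx
          · rcases hx with rfl
            simp only [Set.mem_preimage, map_zero]
            constructor <;> norm_num
          · obtain ⟨j, rfl⟩ := hx
            have := key (fun i => A i j)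
            simp only [Set.mem_preimage, this]
            rw [Set.mem_Icc, ← abs_le]
            have h2 := minor j
            calc |(((Bi.updateCol k fun i => A i j).det : ℤ) : ℝ)|
                = ((|(Bi.updateCol k fun i => A i j).det| : ℤ) : ℝ) := by
                  rw [Int.cast_abs]
              _ ≤ ((2 : ℤ) : ℝ) := by exact_mod_cast h2
              _ = 2 := by norm_num
        · obtain ⟨j, rfl⟩ := hx
          have hneg : (fun i => -(A i j : ℝ)) = -(fun i => (A i j : ℝ)) := by
            funext i; simp
          simp only [Set.mem_preimage, hneg, map_neg]
          rw [Set.mem_Icc, ← abs_le, abs_neg, key (fun i => A i j)]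
          have h2 := minor j
          calc |(((Bi.updateCol k fun i => A i j).det : ℤ) : ℝ)|
              = ((|(Bi.updateCol k fun i => A i j).det| : ℤ) : ℝ) := by
                rw [Int.cast_abs]
            _ ≤ ((2 : ℤ) : ℝ) := by exact_mod_cast h2
            _ = 2 := by norm_num
      have hconv : Convex ℝ (f ⁻¹' Set.Icc (-2 : ℝ) 2) :=
        (convex_Icc (-2 : ℝ) 2).linear_preimage f
      have hmem := convexHull_min hsub hconv ha
      rw [Set.mem_preimage, key a, Set.mem_Icc, ← abs_le] at hmem
      -- identify M with the integer updated matrix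
      have hM : M = Bi.updateCol k a := by
        ext i l
        by_cases hl : l = k
        · subst hl
          simp [hMdef, Matrix.submatrix_apply, Matrix.updateCol_apply, hk]
        · have hgl : g l ≠ 0 := fun h => hl (h1 l h)
          rw [Matrix.updateCol_ne hl]
          simp only [hMdef, Matrix.submatrix_apply, Matrix.of_apply, id,
            Matrix.updateCol_apply, hl, if_false, hBi, dif_neg hgl]
          exact conslem i (g l) hgl
      rw [hM]
      have : ((|(Bi.updateCol k a).det| : ℤ) : ℝ) ≤ ((2 : ℤ) : ℝ) := by
        rw [Int.cast_abs]
        exact le_trans hmem (by norm_num)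
      exact_mod_cast this
    · -- the new column appears twice: determinant is zero
      push_neg at h1
      obtain ⟨k', hk', hkk'⟩ := h1
      have : M.det = 0 := by
        apply Matrix.det_zero_of_column_eq (i := k) (j := k') (Ne.symm hkk')
        intro i
        simp [hMdef, Matrix.submatrix_apply, hk, hk']
      rw [this]; norm_num
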